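/- With the twisted GKLO operators as in the context: suppose i and i+1 both lie in I, let 1 ≤ k, l ≤ m_i with k ≠ l, and let 1 ≤ p ≤ m_{i+1}. Then, writing [A,B] = A∘B − B∘A, the following identity of ℂ-linear endomorphisms of F holds: [κ'_{i,k}, [κ_{i,l}, κ_{i+1,p}]] = M( −ℏ²(γ_{i,k} − γ_{i,l} + 2γ_{i+1,p} + ℏ) / ((γ_{i+1,p} − γ_{i,l} + ½ℏ)(γ_{i,l} + γ_{i,k})(γ_{i+1,p} + γ_{i,k} + (3/2)ℏ)) ) ∘ κ'_{i,k} ∘ κ_{i,l} ∘ κ_{i+1,p}. -/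
import Mathlib


/- Twisted GKLO representation setup (type AI).
   Indices: `i ∈ I = {1,…,n−1}`, `1 ≤ k ≤ m i`, with conventions `m 0 = m n = 0`
   (and `lam 0 = lam n = 0`), so that the indeterminates are exactly
   `ℏ`, `γ_{i,k}` (`i ∈ I`, `1 ≤ k ≤ m i`), `r_{i,t}` (`i ∈ I`, `1 ≤ t ≤ lam i`). -/

noncomputable section

/-- The indexing type of the indeterminates: `ℏ`, the `γ_{i,k}` and the `r_{i,t}`. -/
abbrev GVar (n : ℕ) (m lam : ℕ → ℕ) : Type :=
  Unit ⊕ ((Σ i : Fin (n + 1), Fin (m i)) ⊕ (Σ i : Fin (n + 1), Fin (lam i)))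

/-- `F`, the fraction field of the polynomial ring over `ℂ` in the indeterminates. -/
abbrev GF (n : ℕ) (m lam : ℕ → ℕ) : Type :=
  FractionRing (MvPolynomial (GVar n m lam) ℂ)

/-- The indeterminate `ℏ`. -/
def hb (n : ℕ) (m lam : ℕ → ℕ) : GF n m lam :=
  algebraMap (MvPolynomial (GVar n m lam) ℂ) (GF n m lam) (MvPolynomial.X (Sum.inl ()))

/-- The indeterminate `γ_{i,k}` (for `1 ≤ k ≤ m i`, `i ≤ n`; junk value `0` otherwise). -/
def gam (n : ℕ) (m lam : ℕ → ℕ) (i k : ℕ) : GF n m lam :=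
  if h : i < n + 1 ∧ k - 1 < m i then
    algebraMap (MvPolynomial (GVar n m lam) ℂ) (GF n m lam)
      (MvPolynomial.X (Sum.inr (Sum.inl ⟨⟨i, h.1⟩, ⟨k - 1, h.2⟩⟩)))
  else 0

/-- The indeterminate `r_{i,t}` (for `1 ≤ t ≤ lam i`, `i ≤ n`; junk value `0` otherwise). -/
def rv (n : ℕ) (m lam : ℕ → ℕ) (i t : ℕ) : GF n m lam :=
  if h : i < n + 1 ∧ t - 1 < lam i then
    algebraMap (MvPolynomial (GVar n m lam) ℂ) (GF n m lam)
      (MvPolynomial.X (Sum.inr (Sum.inr ⟨⟨i, h.1⟩, ⟨t - 1, h.2⟩⟩)))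
  else 0

/-- `ξ_{i,k} = γ_{i,k} + ℏ`. -/
def xi (n : ℕ) (m lam : ℕ → ℕ) (i k : ℕ) : GF n m lam :=
  gam n m lam i k + hb n m lam

/-- `R_i(x) = ∏_{t=1}^{λ_i} (x² − r_{i,t}²)`. -/
def RR (n : ℕ) (m lam : ℕ → ℕ) (i : ℕ) (x : GF n m lam) : GF n m lam :=
  ∏ t ∈ Finset.Icc 1 (lam i), (x ^ 2 - rv n m lam i t ^ 2)

/-- The coefficient `c_{i,k}` of the twisted GKLO operator `κ_{i,k}`. -/
def cc (n : ℕ) (m lam : ℕ → ℕ) (i k : ℕ) : GF n m lam :=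
  ((∏ l ∈ Finset.Icc 1 (m (i + 1)),
      (gam n m lam i k ^ 2 - (gam n m lam (i + 1) l + hb n m lam / 2) ^ 2)) *
    ∏ l ∈ Finset.Icc 1 (m (i - 1)),
      (gam n m lam i k + gam n m lam (i - 1) l + hb n m lam / 2)) /
  (2 * (gam n m lam i k - hb n m lam / 2) *
    ∏ l ∈ (Finset.Icc 1 (m i)).erase k, (gam n m lam i k ^ 2 - gam n m lam i l ^ 2))

/-- The coefficient `c'_{i,k}` of the twisted GKLO operator `κ'_{i,k}`. -/
def cc' (n : ℕ) (m lam : ℕ → ℕ) (i k : ℕ) : GF n m lam :=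
  (RR n m lam i (xi n m lam i k) *
    ∏ l ∈ Finset.Icc 1 (m (i - 1)),
      (xi n m lam i k - gam n m lam (i - 1) l - hb n m lam / 2)) /
  (2 * (gam n m lam i k + 3 * hb n m lam / 2) *
    ∏ l ∈ (Finset.Icc 1 (m i)).erase k, (xi n m lam i k ^ 2 - xi n m lam i l ^ 2))

/-- `M(f)`, the multiplication operator `x ↦ f·x`, as a `ℂ`-linear endomorphism of `F`. -/
def Mop (n : ℕ) (m lam : ℕ → ℕ) (f : GF n m lam) : Module.End ℂ (GF n m lam) :=
  LinearMap.mulLeft ℂ f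

/-- `κ_{i,k} = M(c_{i,k}) ∘ σ⁻_{i,k}`, where `σ` is the family of automorphisms `σ⁻`. -/
def kap (n : ℕ) (m lam : ℕ → ℕ) (σ : ℕ → ℕ → (GF n m lam ≃ₐ[ℂ] GF n m lam))
    (i k : ℕ) : Module.End ℂ (GF n m lam) :=
  Mop n m lam (cc n m lam i k) * (σ i k).toLinearMap

/-- `κ'_{i,k} = M(c'_{i,k}) ∘ σ⁺_{i,k}`, where `σ` is the family of automorphisms `σ⁺`. -/
def kap' (n : ℕ) (m lam : ℕ → ℕ) (σ : ℕ → ℕ → (GF n m lam ≃ₐ[ℂ] GF n m lam))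
    (i k : ℕ) : Module.End ℂ (GF n m lam) :=
  Mop n m lam (cc' n m lam i k) * (σ i k).toLinearMap

/-- The Cartan matrix of `sl_n`: `a_{ii} = 2`, `a_{ij} = −1` if `|i−j|=1`, else `0`. -/
def cartan (i j : ℕ) : ℤ :=
  if i = j then 2 else if i + 1 = j ∨ j + 1 = i then -1 else 0

set_option synthInstance.maxHeartbeats 1000000
set_option maxHeartbeats 2000000

section GkloAux

lemma gklo_ratio_master {K : Type*} [Field K] {num den num' den' u v : K} (hu : u ≠ 0)
    (h1 : num' * u = num * v) (h2 : den' = den) :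
    num' / den' = num / den * (v / u) := by
  subst h2
  have hnum : num' = num * v / u := by rw [eq_div_iff hu]; exact h1
  rw [hnum, div_div, mul_comm u den', div_mul_div_comm]

lemma gklo_ratio_master' {K : Type*} [Field K] {num den num' den' u v : K} (hu : u ≠ 0)
    (h1 : num' = num) (h2 : den' * u = den * v) :
    num' / den' = num / den * (u / v) := by
  subst h1
  have hden : den' = den * v / u := by rw [eq_div_iff hu]; exact h2
  rw [hden, div_div_eq_mul_div, div_mul_div_comm]

lemma gklo_lin_ne {n : ℕ} {m lam : ℕ → ℕ} (u v w : GVar n m lam) (huv : u ≠ v) (huw : u ≠ w)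
    (q2 q3 : ℂ) :
    algebraMap (MvPolynomial (GVar n m lam) ℂ) (GF n m lam) (MvPolynomial.X u)
      + algebraMap ℂ (GF n m lam) q2
          * algebraMap (MvPolynomial (GVar n m lam) ℂ) (GF n m lam) (MvPolynomial.X v)
      + algebraMap ℂ (GF n m lam) q3
          * algebraMap (MvPolynomial (GVar n m lam) ℂ) (GF n m lam) (MvPolynomial.X w) ≠ 0 := by
  classical
  have hCmap : ∀ q : ℂ, algebraMap (MvPolynomial (GVar n m lam) ℂ) (GF n m lam)
      (MvPolynomial.C q) = algebraMap ℂ (GF n m lam) q := fun q => by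
    rw [← MvPolynomial.algebraMap_eq, ← IsScalarTower.algebraMap_apply]
  have hpoly : (MvPolynomial.X u + MvPolynomial.C q2 * MvPolynomial.X v
      + MvPolynomial.C q3 * MvPolynomial.X w : MvPolynomial (GVar n m lam) ℂ) ≠ 0 := by
    intro h
    have h2 := congrArg (MvPolynomial.coeff (Finsupp.single u 1)) h
    simp [MvPolynomial.coeff_X', Finsupp.single_eq_single_iff, (Ne.symm huv), (Ne.symm huw)] at h2
  intro h0
  apply hpoly
  apply IsFractionRing.injective (MvPolynomial (GVar n m lam) ℂ) (GF n m lam)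
  rw [map_zero, map_add, map_add, map_mul, map_mul, hCmap, hCmap]
  exact h0

lemma gklo_GF_ext {n : ℕ} {m lam : ℕ → ℕ} (hm0 : m 0 = 0) (hmn : m n = 0)
    (f g : GF n m lam →+* GF n m lam)
    (hC : ∀ z : ℂ, f (algebraMap ℂ (GF n m lam) z) = g (algebraMap ℂ (GF n m lam) z))
    (hh : f (hb n m lam) = g (hb n m lam))
    (hg : ∀ i' k', 1 ≤ i' → i' ≤ n - 1 → 1 ≤ k' → k' ≤ m i' →
      f (gam n m lam i' k') = g (gam n m lam i' k'))
    (hr : ∀ i' t', f (rv n m lam i' t') = g (rv n m lam i' t')) :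
    f = g := by
  apply IsLocalization.ringHom_ext (nonZeroDivisors (MvPolynomial (GVar n m lam) ℂ))
  apply MvPolynomial.ringHom_ext
  · intro r
    simp only [RingHom.coe_comp, Function.comp_apply]
    have hCmap : algebraMap (MvPolynomial (GVar n m lam) ℂ) (GF n m lam)
        (MvPolynomial.C r) = algebraMap ℂ (GF n m lam) r := by
      rw [← MvPolynomial.algebraMap_eq, ← IsScalarTower.algebraMap_apply]
    rw [hCmap]; exact hC r
  · intro vv
    simp only [RingHom.coe_comp, Function.comp_apply]
    match vv with
    | Sum.inl () => exact hh
    | Sum.inr (Sum.inl ⟨iF, kF⟩) =>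
      have hcond : (iF : ℕ) < n + 1 ∧ (kF : ℕ) + 1 - 1 < m iF := ⟨iF.isLt, by simp⟩
      have hik : gam n m lam iF ((kF : ℕ) + 1)
          = algebraMap (MvPolynomial (GVar n m lam) ℂ) (GF n m lam)
              (MvPolynomial.X (Sum.inr (Sum.inl ⟨iF, kF⟩))) := by
        rw [gam, dif_pos hcond]
        rfl
      have hi1 : 1 ≤ (iF : ℕ) := by
        rcases Nat.eq_zero_or_pos (iF : ℕ) with h0 | h1
        · exfalso
          have h2 := kF.isLt
          have h3 : m (iF : ℕ) = 0 := by rw [h0]; exact hm0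
          omega
        · exact h1
      have hi2 : (iF : ℕ) ≤ n - 1 := by
        rcases eq_or_ne (iF : ℕ) n with h0 | h1
        · exfalso
          have h2 := kF.isLt
          have h3 : m (iF : ℕ) = 0 := by rw [h0]; exact hmn
          omega
        · have := iF.isLt; omega
      rw [← hik]
      exact hg iF ((kF : ℕ) + 1) hi1 hi2 (by omega) (by have := kF.isLt; omega)
    | Sum.inr (Sum.inr ⟨iF, tF⟩) =>
      have hcond : (iF : ℕ) < n + 1 ∧ (tF : ℕ) + 1 - 1 < lam iF := ⟨iF.isLt, by simp⟩
      have hik : rv n m lam iF ((tF : ℕ) + 1)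
          = algebraMap (MvPolynomial (GVar n m lam) ℂ) (GF n m lam)
              (MvPolynomial.X (Sum.inr (Sum.inr ⟨iF, tF⟩))) := by
        rw [rv, dif_pos hcond]
        rfl
      rw [← hik]
      exact hr iF ((tF : ℕ) + 1)

lemma gklo_sigma_comm {n : ℕ} {m lam : ℕ → ℕ} (hm0 : m 0 = 0) (hmn : m n = 0)
    (σ τ : GF n m lam ≃ₐ[ℂ] GF n m lam) (s t : ℕ → ℕ → ℂ)
    (hσh : σ (hb n m lam) = hb n m lam) (hτh : τ (hb n m lam) = hb n m lam)
    (hσr : ∀ i' t', σ (rv n m lam i' t') = rv n m lam i' t')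
    (hτr : ∀ i' t', τ (rv n m lam i' t') = rv n m lam i' t')
    (hσg : ∀ i' k', 1 ≤ i' → i' ≤ n - 1 → 1 ≤ k' → k' ≤ m i' →
      σ (gam n m lam i' k') = gam n m lam i' k' + algebraMap ℂ (GF n m lam) (s i' k') * hb n m lam)
    (hτg : ∀ i' k', 1 ≤ i' → i' ≤ n - 1 → 1 ≤ k' → k' ≤ m i' →
      τ (gam n m lam i' k') = gam n m lam i' k' + algebraMap ℂ (GF n m lam) (t i' k') * hb n m lam) :
    ∀ x, σ (τ x) = τ (σ x) := by
  have hmain : ((σ : GF n m lam →+* GF n m lam)).comp (τ : GF n m lam →+* GF n m lam)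
      = ((τ : GF n m lam →+* GF n m lam)).comp (σ : GF n m lam →+* GF n m lam) := by
    apply gklo_GF_ext hm0 hmn
    · intro z
      simp only [RingHom.coe_comp, Function.comp_apply, RingHom.coe_coe, AlgEquiv.commutes]
    · simp only [RingHom.coe_comp, Function.comp_apply, RingHom.coe_coe, hσh, hτh]
    · intro i' k' h1 h2 h3 h4
      simp only [RingHom.coe_comp, Function.comp_apply, RingHom.coe_coe, map_add, map_mul,
        hτg i' k' h1 h2 h3 h4, hσg i' k' h1 h2 h3 h4, hσh, hτh, AlgEquiv.commutes]
      ring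
    · intro i' t'
      simp only [RingHom.coe_comp, Function.comp_apply, RingHom.coe_coe, hσr, hτr]
  intro x
  have := RingHom.congr_fun hmain x
  simpa using this

end GkloAux

theorem gkloKey (K : Type*) [Field K] (a b c d : K)
    (m1 : c + b + d ≠ 0) (m2 : b - c - d ≠ 0) (m3 : b + c + d ≠ 0)
    (m4 : b - a - 2*d ≠ 0) (m5 : b + a + 2*d ≠ 0)
    (m6 : c + a + d ≠ 0)
    (m7 : c - b + d ≠ 0) (m8 : b + a ≠ 0) (m9 : c + a + 3*d ≠ 0) :
    ((b^2-a^2)/(b^2-(a+2*d)^2)) * ((c + a + 3*d)/(c + a + d)) * ((c + b - d)/(c + b + d))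
    - ((b^2-a^2)/(b^2-(a+2*d)^2)) * ((c + a + 3*d)/(c + a + d)) * ((b^2-(c-d)^2)/(b^2-(c+d)^2))
    - ((c + b - d)/(c + b + d)) * (((a+2*d)^2-(b+2*d)^2)/((a+2*d)^2-b^2))
    + ((b^2-(c-d)^2)/(b^2-(c+d)^2)) * (((a+2*d)^2-(b+2*d)^2)/((a+2*d)^2-b^2))
    = (-((2*d)^2) * (a - b + 2*c + 2*d) / ((c - b + d) * (b + a) * (c + a + 3*d)))
      * (((b^2-a^2)/(b^2-(a+2*d)^2)) * (((c + a + 3*d)/(c + a + d)) * ((c + b - d)/(c + b + d)))) := by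
  set D' : K := (b-a-2*d)*(b+a+2*d) with hD'
  have hD'0 : D' ≠ 0 := mul_ne_zero m4 m5
  have hr3 : ((a+2*d)^2-(b+2*d)^2)/((a+2*d)^2-b^2) = ((b-a)*(a+b+4*d))/D' := by
    rw [show ((a+2*d)^2-(b+2*d)^2 : K) = -((b-a)*(a+b+4*d)) by ring,
        show ((a+2*d)^2-b^2 : K) = -D' by rw [hD']; ring, neg_div_neg_eq]
  have hρ3 : (b^2-a^2)/(b^2-(a+2*d)^2) = ((b-a)*(b+a))/D' := by
    rw [show (b^2-a^2 : K) = (b-a)*(b+a) by ring, show (b^2-(a+2*d)^2 : K) = D' by rw [hD']; ring]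
  have hr2 : (b^2-(c-d)^2)/(b^2-(c+d)^2) = ((b-c+d)*(b+c-d))/((b-c-d)*(b+c+d)) := by
    rw [show (b^2-(c-d)^2 : K) = (b-c+d)*(b+c-d) by ring,
        show (b^2-(c+d)^2 : K) = (b-c-d)*(b+c+d) by ring]
  rw [hr3, hρ3, hr2]
  have hQ : (b-c-d)*(b+c+d) ≠ 0 := mul_ne_zero m2 m3
  have e1 : (c + b - d)/(c + b + d) - ((b-c+d)*(b+c-d))/((b-c-d)*(b+c+d))
      = (-(2*d)*(b+c-d))/((b-c-d)*(b+c+d)) := by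
    rw [div_sub_div _ _ m1 hQ,
        show (c+b-d)*((b-c-d)*(b+c+d)) - (c+b+d)*((b-c+d)*(b+c-d))
          = (-(2*d)*(b+c-d))*(c+b+d) by ring,
        show (c+b+d)*((b-c-d)*(b+c+d)) = ((b-c-d)*(b+c+d))*(c+b+d) by ring,
        mul_div_mul_right _ _ m1]
  have e2 : ((b-a)*(b+a))/D' * ((c + a + 3*d)/(c + a + d)) - ((b-a)*(a+b+4*d))/D'
      = ((b-a)*(2*d)*(b-a-2*c-2*d))/(D'*(c+a+d)) := by
    rw [div_mul_div_comm, div_sub_div _ _ (mul_ne_zero hD'0 m6) hD'0,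
        show (b-a)*(b+a)*(c+a+3*d)*D' - D'*(c+a+d)*((b-a)*(a+b+4*d))
          = ((b-a)*(2*d)*(b-a-2*c-2*d))*D' by ring,
        show D'*(c+a+d)*D' = (D'*(c+a+d))*D' by ring,
        mul_div_mul_right _ _ hD'0]
  have hY1 : (D'*(c+a+d)) * ((b-c-d)*(b+c+d)) ≠ 0 :=
    mul_ne_zero (mul_ne_zero hD'0 m6) hQ
  have hY2 : ((c - b + d) * (b + a) * (c + a + 3*d)) * (D'*((c+a+d)*(c+b+d))) ≠ 0 :=
    mul_ne_zero (mul_ne_zero (mul_ne_zero m7 m8) m9)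
      (mul_ne_zero hD'0 (mul_ne_zero m6 m1))
  calc ((b-a)*(b+a))/D' * ((c + a + 3*d)/(c + a + d)) * ((c + b - d)/(c + b + d))
      - ((b-a)*(b+a))/D' * ((c + a + 3*d)/(c + a + d)) * (((b-c+d)*(b+c-d))/((b-c-d)*(b+c+d)))
      - ((c + b - d)/(c + b + d)) * (((b-a)*(a+b+4*d))/D')
      + (((b-c+d)*(b+c-d))/((b-c-d)*(b+c+d))) * (((b-a)*(a+b+4*d))/D')
      = (((b-a)*(b+a))/D' * ((c + a + 3*d)/(c + a + d)) - ((b-a)*(a+b+4*d))/D')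
        * ((c + b - d)/(c + b + d) - ((b-c+d)*(b+c-d))/((b-c-d)*(b+c+d))) := by ring
    _ = (((b-a)*(2*d)*(b-a-2*c-2*d))/(D'*(c+a+d))) * ((-(2*d)*(b+c-d))/((b-c-d)*(b+c+d))) := by
        rw [e1, e2]
    _ = ((b-a)*(2*d)*(b-a-2*c-2*d) * (-(2*d)*(b+c-d)))/((D'*(c+a+d)) * ((b-c-d)*(b+c+d))) :=
        div_mul_div_comm _ _ _ _
    _ = (-((2*d)^2) * (a - b + 2*c + 2*d) * ((b-a)*(b+a) * ((c + a + 3*d)*(c + b - d))))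
        / (((c - b + d) * (b + a) * (c + a + 3*d)) * (D'*((c+a+d)*(c+b+d)))) := by
        rw [div_eq_div_iff hY1 hY2]; ring
    _ = (-((2*d)^2) * (a - b + 2*c + 2*d) / ((c - b + d) * (b + a) * (c + a + 3*d)))
      * ((((b-a)*(b+a))/D') * (((c + a + 3*d)/(c + a + d)) * ((c + b - d)/(c + b + d)))) := by
        rw [div_mul_div_comm, div_mul_div_comm, div_mul_div_comm]

theorem gklo_mixed_triple_3 (n : ℕ) (hn : 2 ≤ n) (m lam : ℕ → ℕ)
    (hm0 : m 0 = 0) (hmn : m n = 0) (hlam0 : lam 0 = 0) (hlamn : lam n = 0)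
    (σm σp : ℕ → ℕ → (GF n m lam ≃ₐ[ℂ] GF n m lam))
    (hσmh : ∀ i k, σm i k (hb n m lam) = hb n m lam)
    (hσph : ∀ i k, σp i k (hb n m lam) = hb n m lam)
    (hσmr : ∀ i k i' t, σm i k (rv n m lam i' t) = rv n m lam i' t)
    (hσpr : ∀ i k i' t, σp i k (rv n m lam i' t) = rv n m lam i' t)
    (hσmg : ∀ i k i' k', 1 ≤ i' → i' ≤ n - 1 → 1 ≤ k' → k' ≤ m i' →
      σm i k (gam n m lam i' k') =
        if i' = i ∧ k' = k then gam n m lam i k - hb n m lam else gam n m lam i' k')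
    (hσpg : ∀ i k i' k', 1 ≤ i' → i' ≤ n - 1 → 1 ≤ k' → k' ≤ m i' →
      σp i k (gam n m lam i' k') =
        if i' = i ∧ k' = k then gam n m lam i k + hb n m lam else gam n m lam i' k')
    (i k l p : ℕ)
    (hi : 1 ≤ i) (hi1 : i + 1 ≤ n - 1) (hk : 1 ≤ k) (hk' : k ≤ m i)
    (hl : 1 ≤ l) (hl' : l ≤ m i) (hkl : k ≠ l)
    (hp : 1 ≤ p) (hp' : p ≤ m (i + 1)) :
    kap' n m lam σp i k *
          (kap n m lam σm i l * kap n m lam σm (i + 1) p -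
            kap n m lam σm (i + 1) p * kap n m lam σm i l) -
        (kap n m lam σm i l * kap n m lam σm (i + 1) p -
            kap n m lam σm (i + 1) p * kap n m lam σm i l) *
          kap' n m lam σp i k =
      Mop n m lam
          (-(hb n m lam ^ 2) *
              (gam n m lam i k - gam n m lam i l + 2 * gam n m lam (i + 1) p + hb n m lam) /
            ((gam n m lam (i + 1) p - gam n m lam i l + hb n m lam / 2) *
              (gam n m lam i l + gam n m lam i k) *
              (gam n m lam (i + 1) p + gam n m lam i k + 3 * hb n m lam / 2))) *
        kap' n m lam σp i k * kap n m lam σm i l * kap n m lam σm (i + 1) p := by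
  classical
  have hbi : i < n + 1 := by omega
  have hbi1 : i + 1 < n + 1 := by omega
  have hbk : k - 1 < m i := by omega
  have hbl : l - 1 < m i := by omega
  have hbp : p - 1 < m (i + 1) := by omega
  have hin : i ≤ n - 1 := by omega
  have haeq : gam n m lam i k = algebraMap (MvPolynomial (GVar n m lam) ℂ) (GF n m lam) (MvPolynomial.X (Sum.inr (Sum.inl ⟨⟨i, hbi⟩, ⟨k - 1, hbk⟩⟩) : GVar n m lam)) := by
    rw [gam, dif_pos ⟨hbi, hbk⟩]
  have hbeq : gam n m lam i l = algebraMap (MvPolynomial (GVar n m lam) ℂ) (GF n m lam) (MvPolynomial.X (Sum.inr (Sum.inl ⟨⟨i, hbi⟩, ⟨l - 1, hbl⟩⟩) : GVar n m lam)) := by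
    rw [gam, dif_pos ⟨hbi, hbl⟩]
  have hceq : gam n m lam (i + 1) p = algebraMap (MvPolynomial (GVar n m lam) ℂ) (GF n m lam) (MvPolynomial.X (Sum.inr (Sum.inl ⟨⟨i + 1, hbi1⟩, ⟨p - 1, hbp⟩⟩) : GVar n m lam)) := by
    rw [gam, dif_pos ⟨hbi1, hbp⟩]
  have hheq : hb n m lam = algebraMap (MvPolynomial (GVar n m lam) ℂ) (GF n m lam) (MvPolynomial.X (Sum.inl () : GVar n m lam)) := by rw [hb]
  have dba : (Sum.inr (Sum.inl ⟨⟨i, hbi⟩, ⟨l - 1, hbl⟩⟩) : GVar n m lam) ≠ (Sum.inr (Sum.inl ⟨⟨i, hbi⟩, ⟨k - 1, hbk⟩⟩) : GVar n m lam) := by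
    intro hEq
    have h2 := congrArg (fun v : GVar n m lam => match v with
      | Sum.inr (Sum.inl s) => (s.2 : ℕ)
      | _ => 0) hEq
    dsimp only at h2
    omega
  have dab : (Sum.inr (Sum.inl ⟨⟨i, hbi⟩, ⟨k - 1, hbk⟩⟩) : GVar n m lam) ≠ (Sum.inr (Sum.inl ⟨⟨i, hbi⟩, ⟨l - 1, hbl⟩⟩) : GVar n m lam) := Ne.symm dba
  have dca : (Sum.inr (Sum.inl ⟨⟨i + 1, hbi1⟩, ⟨p - 1, hbp⟩⟩) : GVar n m lam) ≠ (Sum.inr (Sum.inl ⟨⟨i, hbi⟩, ⟨k - 1, hbk⟩⟩) : GVar n m lam) := by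
    intro hEq
    have h2 := congrArg (fun v : GVar n m lam => match v with
      | Sum.inr (Sum.inl s) => (s.1 : ℕ)
      | _ => 0) hEq
    dsimp only at h2
    omega
  have dcb : (Sum.inr (Sum.inl ⟨⟨i + 1, hbi1⟩, ⟨p - 1, hbp⟩⟩) : GVar n m lam) ≠ (Sum.inr (Sum.inl ⟨⟨i, hbi⟩, ⟨l - 1, hbl⟩⟩) : GVar n m lam) := by
    intro hEq
    have h2 := congrArg (fun v : GVar n m lam => match v with
      | Sum.inr (Sum.inl s) => (s.1 : ℕ)
      | _ => 0) hEq
    dsimp only at h2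
    omega
  have dbc : (Sum.inr (Sum.inl ⟨⟨i, hbi⟩, ⟨l - 1, hbl⟩⟩) : GVar n m lam) ≠ (Sum.inr (Sum.inl ⟨⟨i + 1, hbi1⟩, ⟨p - 1, hbp⟩⟩) : GVar n m lam) := Ne.symm dcb
  have dah : (Sum.inr (Sum.inl ⟨⟨i, hbi⟩, ⟨k - 1, hbk⟩⟩) : GVar n m lam) ≠ (Sum.inl () : GVar n m lam) := by simp
  have dbh : (Sum.inr (Sum.inl ⟨⟨i, hbi⟩, ⟨l - 1, hbl⟩⟩) : GVar n m lam) ≠ (Sum.inl () : GVar n m lam) := by simp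
  have dch : (Sum.inr (Sum.inl ⟨⟨i + 1, hbi1⟩, ⟨p - 1, hbp⟩⟩) : GVar n m lam) ≠ (Sum.inl () : GVar n m lam) := by simp
  have z1 : gam n m lam (i + 1) p + gam n m lam i l + hb n m lam / 2 ≠ 0 := by
    rw [hceq, hbeq, hheq]
    intro h0
    exact gklo_lin_ne _ _ _ dcb dch 1 (1/2)
      (by simp only [map_one, map_neg, map_zero, map_div₀, map_ofNat, one_mul, neg_mul,
            zero_mul]
          linear_combination h0)
  have z2 : gam n m lam i l - gam n m lam (i + 1) p - hb n m lam / 2 ≠ 0 := by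
    rw [hbeq, hceq, hheq]
    intro h0
    exact gklo_lin_ne _ _ _ dbc dbh (-1) (-(1/2))
      (by simp only [map_one, map_neg, map_zero, map_div₀, map_ofNat, one_mul, neg_mul,
            zero_mul]
          linear_combination h0)
  have z3 : gam n m lam i l + gam n m lam (i + 1) p + hb n m lam / 2 ≠ 0 := by
    rw [hbeq, hceq, hheq]
    intro h0
    exact gklo_lin_ne _ _ _ dbc dbh 1 (1/2)
      (by simp only [map_one, map_neg, map_zero, map_div₀, map_ofNat, one_mul, neg_mul,
            zero_mul]
          linear_combination h0)
  have z4 : gam n m lam i l - gam n m lam i k - hb n m lam ≠ 0 := by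
    rw [hbeq, haeq, hheq]
    intro h0
    exact gklo_lin_ne _ _ _ dba dbh (-1) (-1)
      (by simp only [map_one, map_neg, map_zero, map_div₀, map_ofNat, one_mul, neg_mul,
            zero_mul]
          linear_combination h0)
  have z5 : gam n m lam i l + gam n m lam i k + hb n m lam ≠ 0 := by
    rw [hbeq, haeq, hheq]
    intro h0
    exact gklo_lin_ne _ _ _ dba dbh 1 1
      (by simp only [map_one, map_neg, map_zero, map_div₀, map_ofNat, one_mul, neg_mul,
            zero_mul]
          linear_combination h0)
  have z6 : gam n m lam (i + 1) p + gam n m lam i k + hb n m lam / 2 ≠ 0 := by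
    rw [hceq, haeq, hheq]
    intro h0
    exact gklo_lin_ne _ _ _ dca dch 1 (1/2)
      (by simp only [map_one, map_neg, map_zero, map_div₀, map_ofNat, one_mul, neg_mul,
            zero_mul]
          linear_combination h0)
  have z7 : gam n m lam (i + 1) p - gam n m lam i l + hb n m lam / 2 ≠ 0 := by
    rw [hceq, hbeq, hheq]
    intro h0
    exact gklo_lin_ne _ _ _ dcb dch (-1) (1/2)
      (by simp only [map_one, map_neg, map_zero, map_div₀, map_ofNat, one_mul, neg_mul,
            zero_mul]
          linear_combination h0)
  have z8 : gam n m lam i l + gam n m lam i k ≠ 0 := by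
    rw [hbeq, haeq]
    intro h0
    exact gklo_lin_ne _ _ _ dba dbh 1 0
      (by simp only [map_one, map_neg, map_zero, map_div₀, map_ofNat, one_mul, neg_mul,
            zero_mul]
          linear_combination h0)
  have z9 : gam n m lam (i + 1) p + gam n m lam i k + 3 * hb n m lam / 2 ≠ 0 := by
    rw [hceq, haeq, hheq]
    intro h0
    exact gklo_lin_ne _ _ _ dca dch 1 (3/2)
      (by simp only [map_one, map_neg, map_zero, map_div₀, map_ofNat, one_mul, neg_mul,
            zero_mul]
          linear_combination h0)
  have z10 : gam n m lam i l - gam n m lam i k ≠ 0 := by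
    rw [hbeq, haeq]
    intro h0
    exact gklo_lin_ne _ _ _ dba dbh (-1) 0
      (by simp only [map_one, map_neg, map_zero, map_div₀, map_ofNat, one_mul, neg_mul,
            zero_mul]
          linear_combination h0)
  have z11 : gam n m lam i k + gam n m lam i l + 2 * hb n m lam ≠ 0 := by
    rw [haeq, hbeq, hheq]
    intro h0
    exact gklo_lin_ne _ _ _ dab dah 1 2
      (by simp only [map_one, map_neg, map_zero, map_div₀, map_ofNat, one_mul, neg_mul,
            zero_mul]
          linear_combination h0)
  have zQ : gam n m lam i l ^ 2 - (gam n m lam (i + 1) p + hb n m lam / 2) ^ 2 ≠ 0 := by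
    have e : gam n m lam i l ^ 2 - (gam n m lam (i + 1) p + hb n m lam / 2) ^ 2 = (gam n m lam i l - gam n m lam (i + 1) p - hb n m lam / 2) * (gam n m lam i l + gam n m lam (i + 1) p + hb n m lam / 2) := by
      ring
    rw [e]; exact mul_ne_zero z2 z3
  have zP : gam n m lam i l ^ 2 - gam n m lam i k ^ 2 ≠ 0 := by
    have e : gam n m lam i l ^ 2 - gam n m lam i k ^ 2 = (gam n m lam i l - gam n m lam i k) * (gam n m lam i l + gam n m lam i k) := by ring
    rw [e]; exact mul_ne_zero z10 z8
  have zL : (gam n m lam i k + hb n m lam) ^ 2 - (gam n m lam i l + hb n m lam) ^ 2 ≠ 0 := by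
    have e : (gam n m lam i k + hb n m lam) ^ 2 - (gam n m lam i l + hb n m lam) ^ 2 = -((gam n m lam i l - gam n m lam i k) * (gam n m lam i k + gam n m lam i l + 2 * hb n m lam)) := by ring
    rw [e]; exact neg_ne_zero.mpr (mul_ne_zero z10 z11)
  have hmeml : l ∈ Finset.Icc 1 (m i) := Finset.mem_Icc.mpr ⟨hl, hl'⟩
  have hmemk : k ∈ Finset.Icc 1 (m i) := Finset.mem_Icc.mpr ⟨hk, hk'⟩
  have hmemp : p ∈ Finset.Icc 1 (m (i + 1)) := Finset.mem_Icc.mpr ⟨hp, hp'⟩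
  have hmemke : k ∈ (Finset.Icc 1 (m i)).erase l := Finset.mem_erase.mpr ⟨hkl, hmemk⟩
  have hmemle : l ∈ (Finset.Icc 1 (m i)).erase k := Finset.mem_erase.mpr ⟨Ne.symm hkl, hmeml⟩
  have hPa : σp i k (gam n m lam i k) = gam n m lam i k + hb n m lam := by
    rw [hσpg i k i k hi hin hk hk', if_pos ⟨rfl, rfl⟩]
  have hPb : σp i k (gam n m lam i l) = gam n m lam i l := by
    rw [hσpg i k i l hi hin hl hl', if_neg (by omega)]
  have hPc : σp i k (gam n m lam (i + 1) p) = gam n m lam (i + 1) p := by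
    rw [hσpg i k (i + 1) p (by omega) hi1 hp hp', if_neg (by omega)]
  have hLa : σm i l (gam n m lam i k) = gam n m lam i k := by
    rw [hσmg i l i k hi hin hk hk', if_neg (by omega)]
  have hLb : σm i l (gam n m lam i l) = gam n m lam i l - hb n m lam := by
    rw [hσmg i l i l hi hin hl hl', if_pos ⟨rfl, rfl⟩]
  have hLc : σm i l (gam n m lam (i + 1) p) = gam n m lam (i + 1) p := by
    rw [hσmg i l (i + 1) p (by omega) hi1 hp hp', if_neg (by omega)]
  have hQa : σm (i + 1) p (gam n m lam i k) = gam n m lam i k := by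
    rw [hσmg (i + 1) p i k hi hin hk hk', if_neg (by omega)]
  have hQb : σm (i + 1) p (gam n m lam i l) = gam n m lam i l := by
    rw [hσmg (i + 1) p i l hi hin hl hl', if_neg (by omega)]
  have hQc : σm (i + 1) p (gam n m lam (i + 1) p) = gam n m lam (i + 1) p - hb n m lam := by
    rw [hσmg (i + 1) p (i + 1) p (by omega) hi1 hp hp', if_pos ⟨rfl, rfl⟩]
  have fixL2 : ∀ k', 1 ≤ k' → k' ≤ m (i + 1 + 1) → σm i l (gam n m lam (i + 1 + 1) k') = gam n m lam (i + 1 + 1) k' := by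
    intro k' h1 h2
    by_cases hc : i + 1 + 1 ≤ n - 1
    · rw [hσmg i l (i + 1 + 1) k' (by omega) hc h1 h2, if_neg (by omega)]
    · exfalso
      have h9 : m (i + 1 + 1) = 0 := by rw [show i + 1 + 1 = n by omega]; exact hmn
      omega
  have fixL1 : ∀ k', 1 ≤ k' → k' ≤ m (i + 1) → σm i l (gam n m lam (i + 1) k') = gam n m lam (i + 1) k' := by
    intro k' h1 h2
    rw [hσmg i l (i + 1) k' (by omega) (by omega) h1 h2, if_neg (by omega)]
  have fixL0 : ∀ k', 1 ≤ k' → k' ≤ m (i) → k' ≠ l → σm i l (gam n m lam (i) k') = gam n m lam (i) k' := by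
    intro k' h1 h2 h3
    rw [hσmg i l (i) k' (by omega) (by omega) h1 h2, if_neg (by omega)]
  have fixLm : ∀ k', 1 ≤ k' → k' ≤ m (i - 1) → σm i l (gam n m lam (i - 1) k') = gam n m lam (i - 1) k' := by
    intro k' h1 h2
    by_cases hc : 1 ≤ i - 1
    · rw [hσmg i l (i - 1) k' hc (by omega) h1 h2, if_neg (by omega)]
    · exfalso
      have h9 : m (i - 1) = 0 := by rw [show i - 1 = 0 by omega]; exact hm0
      omega
  have fixQ1 : ∀ k', 1 ≤ k' → k' ≤ m (i + 1) → k' ≠ p → σm (i + 1) p (gam n m lam (i + 1) k') = gam n m lam (i + 1) k' := by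
    intro k' h1 h2 h3
    rw [hσmg (i + 1) p (i + 1) k' (by omega) (by omega) h1 h2, if_neg (by omega)]
  have fixQ0 : ∀ k', 1 ≤ k' → k' ≤ m (i) → σm (i + 1) p (gam n m lam (i) k') = gam n m lam (i) k' := by
    intro k' h1 h2
    rw [hσmg (i + 1) p (i) k' (by omega) (by omega) h1 h2, if_neg (by omega)]
  have fixQm : ∀ k', 1 ≤ k' → k' ≤ m (i - 1) → σm (i + 1) p (gam n m lam (i - 1) k') = gam n m lam (i - 1) k' := by
    intro k' h1 h2
    by_cases hc : 1 ≤ i - 1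
    · rw [hσmg (i + 1) p (i - 1) k' hc (by omega) h1 h2, if_neg (by omega)]
    · exfalso
      have h9 : m (i - 1) = 0 := by rw [show i - 1 = 0 by omega]; exact hm0
      omega
  have fixP2 : ∀ k', 1 ≤ k' → k' ≤ m (i + 1 + 1) → σp i k (gam n m lam (i + 1 + 1) k') = gam n m lam (i + 1 + 1) k' := by
    intro k' h1 h2
    by_cases hc : i + 1 + 1 ≤ n - 1
    · rw [hσpg i k (i + 1 + 1) k' (by omega) hc h1 h2, if_neg (by omega)]
    · exfalso
      have h9 : m (i + 1 + 1) = 0 := by rw [show i + 1 + 1 = n by omega]; exact hmn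
      omega
  have fixP1 : ∀ k', 1 ≤ k' → k' ≤ m (i + 1) → σp i k (gam n m lam (i + 1) k') = gam n m lam (i + 1) k' := by
    intro k' h1 h2
    rw [hσpg i k (i + 1) k' (by omega) (by omega) h1 h2, if_neg (by omega)]
  have fixP0 : ∀ k', 1 ≤ k' → k' ≤ m (i) → k' ≠ k → σp i k (gam n m lam (i) k') = gam n m lam (i) k' := by
    intro k' h1 h2 h3
    rw [hσpg i k (i) k' (by omega) (by omega) h1 h2, if_neg (by omega)]
  have fixPm : ∀ k', 1 ≤ k' → k' ≤ m (i - 1) → σp i k (gam n m lam (i - 1) k') = gam n m lam (i - 1) k' := by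
    intro k' h1 h2
    by_cases hc : 1 ≤ i - 1
    · rw [hσpg i k (i - 1) k' hc (by omega) h1 h2, if_neg (by omega)]
    · exfalso
      have h9 : m (i - 1) = 0 := by rw [show i - 1 = 0 by omega]; exact hm0
      omega
  have hLC : σm i l (cc n m lam (i + 1) p)
      = cc n m lam (i + 1) p * ((gam n m lam (i + 1) p + gam n m lam i l - hb n m lam / 2) / (gam n m lam (i + 1) p + gam n m lam i l + hb n m lam / 2)) := by
    simp only [cc, Nat.add_sub_cancel]
    rw [map_div₀]
    have e1 : σm i l (∏ x ∈ Finset.Icc 1 (m (i + 1 + 1)),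
        (gam n m lam (i + 1) p ^ 2 - (gam n m lam (i + 1 + 1) x + hb n m lam / 2) ^ 2))
        = ∏ x ∈ Finset.Icc 1 (m (i + 1 + 1)),
            (gam n m lam (i + 1) p ^ 2 - (gam n m lam (i + 1 + 1) x + hb n m lam / 2) ^ 2) := by
      rw [map_prod]
      refine Finset.prod_congr rfl fun x hx => ?_
      have hx2 := Finset.mem_Icc.mp hx
      simp only [map_sub, map_pow, map_add, map_div₀, map_ofNat, hσmh, hLc,
        fixL2 x hx2.1 hx2.2]
    have e2 : σm i l (∏ x ∈ (Finset.Icc 1 (m i)).erase l, (gam n m lam (i + 1) p + gam n m lam i x + hb n m lam / 2))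
        = ∏ x ∈ (Finset.Icc 1 (m i)).erase l, (gam n m lam (i + 1) p + gam n m lam i x + hb n m lam / 2) := by
      rw [map_prod]
      refine Finset.prod_congr rfl fun x hx => ?_
      have hx2 := Finset.mem_Icc.mp (Finset.mem_of_mem_erase hx)
      simp only [map_add, map_div₀, map_ofNat, hσmh, hLc,
        fixL0 x hx2.1 hx2.2 (Finset.ne_of_mem_erase hx)]
    have e3 : σm i l (∏ x ∈ (Finset.Icc 1 (m (i + 1))).erase p,
        (gam n m lam (i + 1) p ^ 2 - gam n m lam (i + 1) x ^ 2))
        = ∏ x ∈ (Finset.Icc 1 (m (i + 1))).erase p, (gam n m lam (i + 1) p ^ 2 - gam n m lam (i + 1) x ^ 2) := by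
      rw [map_prod]
      refine Finset.prod_congr rfl fun x hx => ?_
      have hx2 := Finset.mem_Icc.mp (Finset.mem_of_mem_erase hx)
      simp only [map_sub, map_pow, hLc, fixL1 x hx2.1 hx2.2]
    refine gklo_ratio_master z1 ?_ ?_
    · rw [← Finset.mul_prod_erase _ _ hmeml]
      simp only [map_mul, map_add, map_div₀, map_ofNat, hσmh, hLc, hLb]
      rw [e1, e2]
      ring
    · simp only [map_mul, map_sub, map_div₀, map_ofNat, hσmh, hLc]
      rw [e3]
  have hQB : σm (i + 1) p (cc n m lam i l)
      = cc n m lam i l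
        * ((gam n m lam i l ^ 2 - (gam n m lam (i + 1) p - hb n m lam / 2) ^ 2) / (gam n m lam i l ^ 2 - (gam n m lam (i + 1) p + hb n m lam / 2) ^ 2)) := by
    simp only [cc]
    rw [map_div₀]
    have e1 : σm (i + 1) p (∏ x ∈ (Finset.Icc 1 (m (i + 1))).erase p,
        (gam n m lam i l ^ 2 - (gam n m lam (i + 1) x + hb n m lam / 2) ^ 2))
        = ∏ x ∈ (Finset.Icc 1 (m (i + 1))).erase p,
            (gam n m lam i l ^ 2 - (gam n m lam (i + 1) x + hb n m lam / 2) ^ 2) := by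
      rw [map_prod]
      refine Finset.prod_congr rfl fun x hx => ?_
      have hx2 := Finset.mem_Icc.mp (Finset.mem_of_mem_erase hx)
      simp only [map_sub, map_pow, map_add, map_div₀, map_ofNat, hσmh, hQb,
        fixQ1 x hx2.1 hx2.2 (Finset.ne_of_mem_erase hx)]
    have e2 : σm (i + 1) p (∏ x ∈ Finset.Icc 1 (m (i - 1)), (gam n m lam i l + gam n m lam (i - 1) x + hb n m lam / 2))
        = ∏ x ∈ Finset.Icc 1 (m (i - 1)), (gam n m lam i l + gam n m lam (i - 1) x + hb n m lam / 2) := by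
      rw [map_prod]
      refine Finset.prod_congr rfl fun x hx => ?_
      have hx2 := Finset.mem_Icc.mp hx
      simp only [map_add, map_div₀, map_ofNat, hσmh, hQb, fixQm x hx2.1 hx2.2]
    have e3 : σm (i + 1) p (∏ x ∈ (Finset.Icc 1 (m i)).erase l, (gam n m lam i l ^ 2 - gam n m lam i x ^ 2))
        = ∏ x ∈ (Finset.Icc 1 (m i)).erase l, (gam n m lam i l ^ 2 - gam n m lam i x ^ 2) := by
      rw [map_prod]
      refine Finset.prod_congr rfl fun x hx => ?_
      have hx2 := Finset.mem_Icc.mp (Finset.mem_of_mem_erase hx)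
      simp only [map_sub, map_pow, hQb, fixQ0 x hx2.1 hx2.2]
    refine gklo_ratio_master zQ ?_ ?_
    · rw [← Finset.mul_prod_erase _ _ hmemp]
      simp only [map_mul, map_sub, map_pow, map_add, map_div₀, map_ofNat, hσmh, hQb, hQc]
      rw [e1, e2]
      ring
    · simp only [map_mul, map_sub, map_div₀, map_ofNat, hσmh, hQb]
      rw [e3]
  have hPB : σp i k (cc n m lam i l)
      = cc n m lam i l * ((gam n m lam i l ^ 2 - gam n m lam i k ^ 2) / (gam n m lam i l ^ 2 - (gam n m lam i k + hb n m lam) ^ 2)) := by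
    simp only [cc]
    rw [map_div₀]
    have e1 : σp i k (∏ x ∈ Finset.Icc 1 (m (i + 1)),
        (gam n m lam i l ^ 2 - (gam n m lam (i + 1) x + hb n m lam / 2) ^ 2))
        = ∏ x ∈ Finset.Icc 1 (m (i + 1)), (gam n m lam i l ^ 2 - (gam n m lam (i + 1) x + hb n m lam / 2) ^ 2) := by
      rw [map_prod]
      refine Finset.prod_congr rfl fun x hx => ?_
      have hx2 := Finset.mem_Icc.mp hx
      simp only [map_sub, map_pow, map_add, map_div₀, map_ofNat, hσph, hPb,
        fixP1 x hx2.1 hx2.2]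
    have e2 : σp i k (∏ x ∈ Finset.Icc 1 (m (i - 1)), (gam n m lam i l + gam n m lam (i - 1) x + hb n m lam / 2))
        = ∏ x ∈ Finset.Icc 1 (m (i - 1)), (gam n m lam i l + gam n m lam (i - 1) x + hb n m lam / 2) := by
      rw [map_prod]
      refine Finset.prod_congr rfl fun x hx => ?_
      have hx2 := Finset.mem_Icc.mp hx
      simp only [map_add, map_div₀, map_ofNat, hσph, hPb, fixPm x hx2.1 hx2.2]
    have e3 : σp i k (∏ x ∈ ((Finset.Icc 1 (m i)).erase l).erase k, (gam n m lam i l ^ 2 - gam n m lam i x ^ 2))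
        = ∏ x ∈ ((Finset.Icc 1 (m i)).erase l).erase k, (gam n m lam i l ^ 2 - gam n m lam i x ^ 2) := by
      rw [map_prod]
      refine Finset.prod_congr rfl fun x hx => ?_
      have hx2 := Finset.mem_Icc.mp (Finset.mem_of_mem_erase (Finset.mem_of_mem_erase hx))
      simp only [map_sub, map_pow, hPb, fixP0 x hx2.1 hx2.2 (Finset.ne_of_mem_erase hx)]
    refine gklo_ratio_master' zP ?_ ?_
    · simp only [map_mul]
      rw [e1, e2]
    · rw [← Finset.mul_prod_erase _ _ hmemke]
      simp only [map_mul, map_sub, map_pow, map_div₀, map_ofNat, hσph, hPa, hPb]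
      rw [e3]
      ring
  have hPC : σp i k (cc n m lam (i + 1) p)
      = cc n m lam (i + 1) p * ((gam n m lam (i + 1) p + gam n m lam i k + 3 * hb n m lam / 2) / (gam n m lam (i + 1) p + gam n m lam i k + hb n m lam / 2)) := by
    simp only [cc, Nat.add_sub_cancel]
    rw [map_div₀]
    have e1 : σp i k (∏ x ∈ Finset.Icc 1 (m (i + 1 + 1)),
        (gam n m lam (i + 1) p ^ 2 - (gam n m lam (i + 1 + 1) x + hb n m lam / 2) ^ 2))
        = ∏ x ∈ Finset.Icc 1 (m (i + 1 + 1)),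
            (gam n m lam (i + 1) p ^ 2 - (gam n m lam (i + 1 + 1) x + hb n m lam / 2) ^ 2) := by
      rw [map_prod]
      refine Finset.prod_congr rfl fun x hx => ?_
      have hx2 := Finset.mem_Icc.mp hx
      simp only [map_sub, map_pow, map_add, map_div₀, map_ofNat, hσph, hPc,
        fixP2 x hx2.1 hx2.2]
    have e2 : σp i k (∏ x ∈ (Finset.Icc 1 (m i)).erase k, (gam n m lam (i + 1) p + gam n m lam i x + hb n m lam / 2))
        = ∏ x ∈ (Finset.Icc 1 (m i)).erase k, (gam n m lam (i + 1) p + gam n m lam i x + hb n m lam / 2) := by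
      rw [map_prod]
      refine Finset.prod_congr rfl fun x hx => ?_
      have hx2 := Finset.mem_Icc.mp (Finset.mem_of_mem_erase hx)
      simp only [map_add, map_div₀, map_ofNat, hσph, hPc,
        fixP0 x hx2.1 hx2.2 (Finset.ne_of_mem_erase hx)]
    have e3 : σp i k (∏ x ∈ (Finset.Icc 1 (m (i + 1))).erase p,
        (gam n m lam (i + 1) p ^ 2 - gam n m lam (i + 1) x ^ 2))
        = ∏ x ∈ (Finset.Icc 1 (m (i + 1))).erase p, (gam n m lam (i + 1) p ^ 2 - gam n m lam (i + 1) x ^ 2) := by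
      rw [map_prod]
      refine Finset.prod_congr rfl fun x hx => ?_
      have hx2 := Finset.mem_Icc.mp (Finset.mem_of_mem_erase hx)
      simp only [map_sub, map_pow, hPc, fixP1 x hx2.1 hx2.2]
    refine gklo_ratio_master z6 ?_ ?_
    · rw [← Finset.mul_prod_erase _ _ hmemk]
      simp only [map_mul, map_add, map_div₀, map_ofNat, hσph, hPc, hPa]
      rw [e1, e2]
      ring
    · simp only [map_mul, map_sub, map_div₀, map_ofNat, hσph, hPc]
      rw [e3]
  have hLA : σm i l (cc' n m lam i k)
      = cc' n m lam i k
        * (((gam n m lam i k + hb n m lam) ^ 2 - (gam n m lam i l + hb n m lam) ^ 2) / ((gam n m lam i k + hb n m lam) ^ 2 - gam n m lam i l ^ 2)) := by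
    simp only [cc', RR, xi]
    rw [map_div₀]
    have e1 : σm i l (∏ t ∈ Finset.Icc 1 (lam i), ((gam n m lam i k + hb n m lam) ^ 2 - rv n m lam i t ^ 2))
        = ∏ t ∈ Finset.Icc 1 (lam i), ((gam n m lam i k + hb n m lam) ^ 2 - rv n m lam i t ^ 2) := by
      rw [map_prod]
      refine Finset.prod_congr rfl fun x hx => ?_
      simp only [map_sub, map_pow, map_add, hσmh, hLa, hσmr]
    have e2 : σm i l (∏ x ∈ Finset.Icc 1 (m (i - 1)),
        (gam n m lam i k + hb n m lam - gam n m lam (i - 1) x - hb n m lam / 2))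
        = ∏ x ∈ Finset.Icc 1 (m (i - 1)), (gam n m lam i k + hb n m lam - gam n m lam (i - 1) x - hb n m lam / 2) := by
      rw [map_prod]
      refine Finset.prod_congr rfl fun x hx => ?_
      have hx2 := Finset.mem_Icc.mp hx
      simp only [map_sub, map_add, map_div₀, map_ofNat, hσmh, hLa, fixLm x hx2.1 hx2.2]
    have e3 : σm i l (∏ x ∈ ((Finset.Icc 1 (m i)).erase k).erase l,
        ((gam n m lam i k + hb n m lam) ^ 2 - (gam n m lam i x + hb n m lam) ^ 2))
        = ∏ x ∈ ((Finset.Icc 1 (m i)).erase k).erase l,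
            ((gam n m lam i k + hb n m lam) ^ 2 - (gam n m lam i x + hb n m lam) ^ 2) := by
      rw [map_prod]
      refine Finset.prod_congr rfl fun x hx => ?_
      have hx2 := Finset.mem_Icc.mp (Finset.mem_of_mem_erase (Finset.mem_of_mem_erase hx))
      simp only [map_sub, map_pow, map_add, hσmh, hLa,
        fixL0 x hx2.1 hx2.2 (Finset.ne_of_mem_erase hx)]
    refine gklo_ratio_master' zL ?_ ?_
    · simp only [map_mul]
      rw [e1, e2]
    · rw [← Finset.mul_prod_erase _ _ hmemle]
      simp only [map_mul, map_sub, map_pow, map_add, map_div₀, map_ofNat, hσmh, hLa, hLb]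
      rw [e3]
      ring
  have hQA : σm (i + 1) p (cc' n m lam i k) = cc' n m lam i k := by
    simp only [cc', RR, xi]
    rw [map_div₀]
    have e1 : σm (i + 1) p (∏ t ∈ Finset.Icc 1 (lam i), ((gam n m lam i k + hb n m lam) ^ 2 - rv n m lam i t ^ 2))
        = ∏ t ∈ Finset.Icc 1 (lam i), ((gam n m lam i k + hb n m lam) ^ 2 - rv n m lam i t ^ 2) := by
      rw [map_prod]
      refine Finset.prod_congr rfl fun x hx => ?_
      simp only [map_sub, map_pow, map_add, hσmh, hQa, hσmr]
    have e2 : σm (i + 1) p (∏ x ∈ Finset.Icc 1 (m (i - 1)),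
        (gam n m lam i k + hb n m lam - gam n m lam (i - 1) x - hb n m lam / 2))
        = ∏ x ∈ Finset.Icc 1 (m (i - 1)), (gam n m lam i k + hb n m lam - gam n m lam (i - 1) x - hb n m lam / 2) := by
      rw [map_prod]
      refine Finset.prod_congr rfl fun x hx => ?_
      have hx2 := Finset.mem_Icc.mp hx
      simp only [map_sub, map_add, map_div₀, map_ofNat, hσmh, hQa, fixQm x hx2.1 hx2.2]
    have e3 : σm (i + 1) p (∏ x ∈ (Finset.Icc 1 (m i)).erase k,
        ((gam n m lam i k + hb n m lam) ^ 2 - (gam n m lam i x + hb n m lam) ^ 2))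
        = ∏ x ∈ (Finset.Icc 1 (m i)).erase k, ((gam n m lam i k + hb n m lam) ^ 2 - (gam n m lam i x + hb n m lam) ^ 2) := by
      rw [map_prod]
      refine Finset.prod_congr rfl fun x hx => ?_
      have hx2 := Finset.mem_Icc.mp (Finset.mem_of_mem_erase hx)
      simp only [map_sub, map_pow, map_add, hσmh, hQa, fixQ0 x hx2.1 hx2.2]
    simp only [map_mul, map_add, map_div₀, map_ofNat, hσmh, hQa]
    rw [e1, e2, e3]
  have hPr1 : σp i k ((gam n m lam (i + 1) p + gam n m lam i l - hb n m lam / 2) / (gam n m lam (i + 1) p + gam n m lam i l + hb n m lam / 2))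
      = (gam n m lam (i + 1) p + gam n m lam i l - hb n m lam / 2) / (gam n m lam (i + 1) p + gam n m lam i l + hb n m lam / 2) := by
    simp only [map_div₀, map_add, map_sub, map_ofNat, hσph, hPb, hPc]
  have hPr2 : σp i k ((gam n m lam i l ^ 2 - (gam n m lam (i + 1) p - hb n m lam / 2) ^ 2) / (gam n m lam i l ^ 2 - (gam n m lam (i + 1) p + hb n m lam / 2) ^ 2))
      = (gam n m lam i l ^ 2 - (gam n m lam (i + 1) p - hb n m lam / 2) ^ 2) / (gam n m lam i l ^ 2 - (gam n m lam (i + 1) p + hb n m lam / 2) ^ 2) := by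
    simp only [map_div₀, map_sub, map_pow, map_add, map_ofNat, hσph, hPb, hPc]
  have hQr3 : σm (i + 1) p (((gam n m lam i k + hb n m lam) ^ 2 - (gam n m lam i l + hb n m lam) ^ 2) / ((gam n m lam i k + hb n m lam) ^ 2 - gam n m lam i l ^ 2))
      = ((gam n m lam i k + hb n m lam) ^ 2 - (gam n m lam i l + hb n m lam) ^ 2) / ((gam n m lam i k + hb n m lam) ^ 2 - gam n m lam i l ^ 2) := by
    simp only [map_div₀, map_sub, map_pow, map_add, hσmh, hQa, hQb]
  have affL : ∀ i' k', 1 ≤ i' → i' ≤ n - 1 → 1 ≤ k' → k' ≤ m i' →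
      σm i l (gam n m lam i' k') = gam n m lam i' k'
        + algebraMap ℂ (GF n m lam) (if i' = i ∧ k' = l then (-1 : ℂ) else 0) * hb n m lam := by
    intro i' k' h1 h2 h3 h4
    rw [hσmg i l i' k' h1 h2 h3 h4]
    by_cases hc : i' = i ∧ k' = l
    · rw [if_pos hc, if_pos hc, map_neg, map_one]
      obtain ⟨rfl, rfl⟩ := hc
      ring
    · rw [if_neg hc, if_neg hc, map_zero, zero_mul, add_zero]
  have affQ : ∀ i' k', 1 ≤ i' → i' ≤ n - 1 → 1 ≤ k' → k' ≤ m i' →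
      σm (i + 1) p (gam n m lam i' k') = gam n m lam i' k'
        + algebraMap ℂ (GF n m lam) (if i' = i + 1 ∧ k' = p then (-1 : ℂ) else 0)
          * hb n m lam := by
    intro i' k' h1 h2 h3 h4
    rw [hσmg (i + 1) p i' k' h1 h2 h3 h4]
    by_cases hc : i' = i + 1 ∧ k' = p
    · rw [if_pos hc, if_pos hc, map_neg, map_one]
      obtain ⟨rfl, rfl⟩ := hc
      ring
    · rw [if_neg hc, if_neg hc, map_zero, zero_mul, add_zero]
  have affP : ∀ i' k', 1 ≤ i' → i' ≤ n - 1 → 1 ≤ k' → k' ≤ m i' →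
      σp i k (gam n m lam i' k') = gam n m lam i' k'
        + algebraMap ℂ (GF n m lam) (if i' = i ∧ k' = k then (1 : ℂ) else 0) * hb n m lam := by
    intro i' k' h1 h2 h3 h4
    rw [hσpg i k i' k' h1 h2 h3 h4]
    by_cases hc : i' = i ∧ k' = k
    · rw [if_pos hc, if_pos hc, map_one, one_mul]
      obtain ⟨rfl, rfl⟩ := hc
      rfl
    · rw [if_neg hc, if_neg hc, map_zero, zero_mul, add_zero]
  have cQL : ∀ y, σm (i + 1) p (σm i l y) = σm i l (σm (i + 1) p y) :=
    gklo_sigma_comm hm0 hmn (σm (i + 1) p) (σm i l) _ _ (hσmh (i + 1) p) (hσmh i l)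
      (hσmr (i + 1) p) (hσmr i l) affQ affL
  have cQP : ∀ y, σm (i + 1) p (σp i k y) = σp i k (σm (i + 1) p y) :=
    gklo_sigma_comm hm0 hmn (σm (i + 1) p) (σp i k) _ _ (hσmh (i + 1) p) (hσph i k)
      (hσmr (i + 1) p) (hσpr i k) affQ affP
  have cLP : ∀ y, σm i l (σp i k y) = σp i k (σm i l y) :=
    gklo_sigma_comm hm0 hmn (σm i l) (σp i k) _ _ (hσmh i l) (hσph i k)
      (hσmr i l) (hσpr i k) affL affP
  have m4' : gam n m lam i l - gam n m lam i k - 2 * (hb n m lam / 2) ≠ 0 := by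
    rw [show gam n m lam i l - gam n m lam i k - 2 * (hb n m lam / 2) = gam n m lam i l - gam n m lam i k - hb n m lam by ring]
    exact z4
  have m5' : gam n m lam i l + gam n m lam i k + 2 * (hb n m lam / 2) ≠ 0 := by
    rw [show gam n m lam i l + gam n m lam i k + 2 * (hb n m lam / 2) = gam n m lam i l + gam n m lam i k + hb n m lam by ring]
    exact z5
  have m9' : gam n m lam (i + 1) p + gam n m lam i k + 3 * (hb n m lam / 2) ≠ 0 := by
    rw [show gam n m lam (i + 1) p + gam n m lam i k + 3 * (hb n m lam / 2) = gam n m lam (i + 1) p + gam n m lam i k + 3 * hb n m lam / 2 by ring]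
    exact z9
  have ekey := gkloKey (GF n m lam) (gam n m lam i k) (gam n m lam i l) (gam n m lam (i + 1) p) (hb n m lam / 2) z1 z2 z3 m4' m5' z6 z7 z8 m9'
  rw [show (2 : GF n m lam) * (hb n m lam / 2) = hb n m lam by ring] at ekey
  rw [show (3 : GF n m lam) * (hb n m lam / 2) = 3 * hb n m lam / 2 by ring] at ekey
  apply LinearMap.ext
  intro x
  simp only [kap, kap', Mop, LinearMap.sub_apply, Module.End.mul_apply, LinearMap.mulLeft_apply,
    AlgEquiv.toLinearMap_apply]
  simp only [map_mul, map_sub, hLC, hQB, hQA, hLA, hPB, hPC, hPr1, hPr2, hQr3, cQL, cQP, cLP]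
  linear_combination (cc' n m lam i k * (cc n m lam i l * (cc n m lam (i + 1) p
    * σp i k (σm i l (σm (i + 1) p x))))) * ekey
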